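/- Let u and v be nonzero vectors in a real inner product space with ⟨u, v⟩ ≥ 0, and suppose ‖u - v‖² ≤ α(‖u‖² + ‖v‖²) for some α ∈ [0, 1). Then the normalized vectors satisfy ‖u/‖u‖ − v/‖v‖‖² ≤ 2α. -/
import Mathlib

theorem stmt_1 {H : Type*} [NormedAddCommGroup H] [InnerProductSpace ℝ H]
    (u v : H) (hu : u ≠ 0) (hv : v ≠ 0) (α : ℝ) (hα0 : 0 ≤ α) (hα1 : α < 1)
    (hinner : 0 ≤ inner (𝕜 := ℝ) u v)
    (hshort : ‖u - v‖ ^ 2 ≤ α * (‖u‖ ^ 2 + ‖v‖ ^ 2)) :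
    ‖(‖u‖⁻¹ • u) - (‖v‖⁻¹ • v)‖ ^ 2 ≤ 2 * α := by
  have ha : (0:ℝ) < ‖u‖ := norm_pos_iff.mpr hu
  have hb : (0:ℝ) < ‖v‖ := norm_pos_iff.mpr hv
  set a := ‖u‖
  set b := ‖v‖
  set t : ℝ := inner (𝕜 := ℝ) u v with ht
  have h1 : ‖u - v‖ ^ 2 = a ^ 2 + b ^ 2 - 2 * t := by
    rw [norm_sub_sq_real]; ring
  have h2 : (1 - α) * (a ^ 2 + b ^ 2) ≤ 2 * t := by nlinarith
  have h3 : 2 * a * b ≤ a ^ 2 + b ^ 2 := by nlinarith [sq_nonneg (a - b)]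
  have h4 : (1 - α) * (2 * a * b) ≤ 2 * t := by nlinarith
  have hgoal : ‖(a⁻¹ • u) - (b⁻¹ • v)‖ ^ 2 = 2 - 2 * t / (a * b) := by
    rw [norm_sub_sq_real]
    rw [norm_smul, norm_smul, real_inner_smul_left, real_inner_smul_right]
    rw [Real.norm_eq_abs, Real.norm_eq_abs, abs_of_pos (by positivity),
      abs_of_pos (by positivity)]
    field_simp
    ring
  rw [hgoal]
  have h5 : (1 - α) ≤ t / (a * b) := by
    rw [le_div_iff₀ (by positivity)]
    nlinarith
  have h6 : 2 * t / (a * b) = 2 * (t / (a * b)) := by ring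
  linarith
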